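/- Let G be a simple simply-connected algebraic group over an algebraically closed field k of characteristic p > 0 very good for G, g its Lie algebra, d = (p-1)·dim g, and I ⊂ Sg* the ideal generated by {v^p : v ∈ g*}. Then the quotient S^d g*/(S^d g* ∩ I) is a one-dimensional trivial G-module; i.e. there is a short exact sequence of G-modules 0 → S^d g* ∩ I → S^d g* →^ε k → 0. -/

import Mathlib

/-!
# Statement 17 (the exact sequence `(2.1)` defining `ε`)

Let `G` be a simple simply-connected algebraic group over an algebraically closed field `k`
of characteristic `p > 0` very good for `G`, `𝔤` its Lie algebra, `d = (p-1)·dim 𝔤`, and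
`I ⊆ S𝔤*` the ideal generated by `{v^p : v ∈ 𝔤*}`.  Then the quotient
`S^d 𝔤*/(S^d 𝔤* ∩ I)` is a one-dimensional *trivial* `G`-module; i.e. there is a short
exact sequence of `G`-modules `0 → S^d 𝔤* ∩ I → S^d 𝔤* →^ε k → 0`.

Conventions.  `S𝔤*` is realized concretely as the polynomial ring `k[x₁, …, x_m]`,
`m = dim 𝔤`, with its grading; `𝔤* = S¹𝔤*` is the degree-one homogeneous part and `I` the
ideal generated by the `p`-th powers of its elements.  The group `G` acts through a
homomorphism `ρ` to graded `k`-algebra automorphisms (the action dual to the adjoint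
action).  Since the theory of reductive groups is not in Mathlib, the hypothesis that the
action is the coadjoint action of a *simple, simply-connected* group is recorded through
its relevant consequence, unimodularity: each `ρ γ` acts on `𝔤* = S¹𝔤*` with determinant
one.  The conclusion `S^d 𝔤*/(S^d 𝔤* ∩ I) ≅ k` as trivial `G`-modules is expressed as:
the quotient has `k`-dimension one, and `G` acts trivially on it
(`ρ γ x - x ∈ I` for all homogeneous `x` of degree `d`).
-/

open MvPolynomial Finsupp Matrix

noncomputable section

namespace Statement17Aux

variable (p m : ℕ) (k : Type) [Field k]

/-- The ideal generated by the `p`-th powers of the variables. -/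
def Jid : Ideal (MvPolynomial (Fin m) k) :=
  Ideal.span (Set.range fun i : Fin m => (X i : MvPolynomial (Fin m) k) ^ p)

/-- The exponent `(p-1, …, p-1)`. -/
def nu : Fin m →₀ ℕ := Finsupp.equivFunOnFinite.symm fun _ => p - 1

/-- The monomial `∏ xᵢ^(p-1)`. -/
def mu : MvPolynomial (Fin m) k := monomial (nu p m) (1 : k)

variable {p m k}

lemma nu_apply (i : Fin m) : nu p m i = p - 1 := rfl

lemma degree_eq_sum_univ (s : Fin m →₀ ℕ) : s.degree = ∑ i : Fin m, s i := by
  rw [Finsupp.degree]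
  exact Finset.sum_subset (Finset.subset_univ _)
    (fun i _ hi => Finsupp.notMem_support_iff.mp hi)

lemma degree_nu : (nu p m).degree = (p - 1) * m := by
  simp [degree_eq_sum_univ, nu_apply, mul_comm]

/-- An exponent of degree 1 is `single j 1`. -/
lemma eq_single_of_degree_one {s : Fin m →₀ ℕ} (h : s.degree = 1) :
    ∃ j, s = Finsupp.single j 1 := by
  have hs0 : s ≠ 0 := by
    intro h0; rw [h0] at h; simp at h
  obtain ⟨j, hj⟩ := Finsupp.support_nonempty_iff.mpr hs0
  have hj1 : 1 ≤ s j := Nat.one_le_iff_ne_zero.mpr (Finsupp.mem_support_iff.mp hj)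
  refine ⟨j, ?_⟩
  ext i
  rcases eq_or_ne i j with rfl | hij
  · have hle : s i ≤ 1 := h ▸ Finsupp.le_degree i s
    simp [le_antisymm hle hj1]
  · rw [Finsupp.single_eq_of_ne' (Ne.symm hij)]
    by_contra hne
    have hi : i ∈ s.support := Finsupp.mem_support_iff.mpr hne
    have h2 : s i + s j ≤ s.degree := by
      rw [Finsupp.degree]
      calc s i + s j = ∑ x ∈ ({i, j} : Finset (Fin m)), s x := by
            rw [Finset.sum_pair hij]
      _ ≤ _ := Finset.sum_le_sum_of_subset (by
            intro x hx
            simp only [Finset.mem_insert, Finset.mem_singleton] at hx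
            rcases hx with rfl | rfl <;> assumption)
    omega

/-- Representation of a degree-one homogeneous polynomial. -/
lemma rep_deg_one {f : MvPolynomial (Fin m) k}
    (hf : f ∈ homogeneousSubmodule (Fin m) k 1) :
    f = ∑ j, coeff (Finsupp.single j 1) f • X j := by
  rw [mem_homogeneousSubmodule] at hf
  apply MvPolynomial.ext
  intro s
  rw [coeff_sum]
  simp only [coeff_smul, coeff_X', smul_eq_mul, mul_ite, mul_one, mul_zero]
  by_cases hex : ∃ j0, s = Finsupp.single j0 1
  · obtain ⟨j0, rfl⟩ := hex
    rw [Finset.sum_eq_single j0]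
    · simp
    · intro j _ hj
      rw [if_neg]
      exact fun he => hj ((Finsupp.single_left_inj one_ne_zero).mp he)
    · simp
  · have h0 : coeff s f = 0 := by
      by_contra h0
      have hw := hf h0
      rw [Pi.one_def, ← Finsupp.degree_eq_weight_one] at hw
      obtain ⟨j0, rfl⟩ := eq_single_of_degree_one hw
      exact hex ⟨j0, rfl⟩
    rw [h0]
    symm; apply Finset.sum_eq_zero; intro j _
    rw [if_neg fun he => hex ⟨j, he.symm⟩]

/-- A polynomial all of whose monomials have some exponent `≥ p` lies in `J`. -/
lemma mem_J_of_support {f : MvPolynomial (Fin m) k}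
    (h : ∀ s ∈ f.support, ∃ i, p ≤ s i) : f ∈ Jid p m k := by
  rw [f.as_sum]
  apply Ideal.sum_mem
  intro s hs
  obtain ⟨i, hi⟩ := h s hs
  have key : monomial s (coeff s f)
      = monomial (s - Finsupp.single i p) (coeff s f) * (X i ^ p) := by
    rw [X_pow_eq_monomial, monomial_mul, mul_one,
      tsub_add_cancel_of_le (Finsupp.single_le_iff.mpr hi)]
  rw [key]
  exact Ideal.mul_mem_left _ _ (Ideal.subset_span ⟨i, rfl⟩)

/-- Pigeonhole. -/
lemma exists_ge_p [Fact p.Prime] {s : Fin m →₀ ℕ} (hd : s.degree = (p - 1) * m)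
    (hs : s ≠ nu p m) : ∃ i, p ≤ s i := by
  by_contra hc
  push_neg at hc
  apply hs
  have hle : ∀ i ∈ Finset.univ, s i ≤ p - 1 := by
    intro i _
    have := hc i
    have hp : 0 < p := (Fact.out : p.Prime).pos
    omega
  have hsum : ∑ i : Fin m, s i = ∑ _i : Fin m, (p - 1) := by
    rw [← degree_eq_sum_univ, hd]
    simp [mul_comm]
  have hall := (Finset.sum_eq_sum_iff_of_le hle).mp hsum
  ext i
  exact hall i (Finset.mem_univ i)

lemma coeff_nu_mu : coeff (nu p m) (mu p m k) = 1 := by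
  simp [mu, coeff_monomial]

lemma mu_mem_homogeneous : mu p m k ∈ homogeneousSubmodule (Fin m) k ((p - 1) * m) := by
  rw [mem_homogeneousSubmodule]
  exact isHomogeneous_monomial _ degree_nu

/-- Decomposition of a homogeneous polynomial of top degree. -/
lemma sub_mem_J [Fact p.Prime] {f : MvPolynomial (Fin m) k}
    (hf : f ∈ homogeneousSubmodule (Fin m) k ((p - 1) * m)) :
    f - coeff (nu p m) f • mu p m k ∈ Jid p m k := by
  rw [mem_homogeneousSubmodule] at hf
  apply mem_J_of_support
  intro s hs
  rw [MvPolynomial.mem_support_iff] at hs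
  have hcs : coeff s (f - coeff (nu p m) f • mu p m k)
      = coeff s f - coeff (nu p m) f * coeff s (mu p m k) := by
    simp [coeff_sub, coeff_smul]
  apply exists_ge_p (s := s)
  · rcases eq_or_ne s (nu p m) with rfl | hne
    · exfalso; apply hs; rw [hcs]; simp [mu, coeff_monomial]
    · have hf0 : coeff s f ≠ 0 := by
        intro h0
        apply hs
        rw [hcs, h0, mu, coeff_monomial, if_neg (fun h => hne h.symm)]
        ring
      have := hf hf0
      rwa [Pi.one_def, ← Finsupp.degree_eq_weight_one] at this
  · intro he
    apply hs
    subst he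
    rw [hcs]
    simp [mu, coeff_monomial]

lemma coeff_nu_eq_zero_of_mem_J [Fact p.Prime] {f : MvPolynomial (Fin m) k}
    (hf : f ∈ Jid p m k) : coeff (nu p m) f = 0 := by
  rw [Jid, Ideal.mem_span_range_iff_exists_fun] at hf
  obtain ⟨c, rfl⟩ := hf
  rw [coeff_sum]
  apply Finset.sum_eq_zero
  intro i _
  rw [X_pow_eq_monomial, coeff_mul_monomial', if_neg]
  intro hle
  have h1 : p ≤ nu p m i := Finsupp.single_le_iff.mp hle
  have h2 : nu p m i = p - 1 := rfl
  have hp : 0 < p := (Fact.out : p.Prime).pos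
  omega

lemma mu_not_mem_J [Fact p.Prime] : mu p m k ∉ Jid p m k := by
  intro h
  have := coeff_nu_eq_zero_of_mem_J h
  rw [coeff_nu_mu] at this
  exact one_ne_zero this

/-! ### The substitution algebra homomorphism attached to a matrix -/

/-- Substitution by a linear change of variables. -/
def phi (M : Matrix (Fin m) (Fin m) k) :
    MvPolynomial (Fin m) k →ₐ[k] MvPolynomial (Fin m) k :=
  aeval fun i => ∑ j, M j i • X j

lemma phi_X (M : Matrix (Fin m) (Fin m) k) (i : Fin m) :
    phi M (X i) = ∑ j, M j i • X j := aeval_X _ _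

lemma phi_mul (M N : Matrix (Fin m) (Fin m) k) :
    phi (M * N) = (phi M).comp (phi N) := by
  apply algHom_ext
  intro i
  rw [phi_X, AlgHom.comp_apply, phi_X, map_sum]
  simp only [_root_.map_smul, phi_X, Matrix.mul_apply, Finset.sum_smul, Finset.smul_sum,
    smul_smul]
  rw [Finset.sum_comm]
  apply Finset.sum_congr rfl; intro l _
  apply Finset.sum_congr rfl; intro j _
  rw [mul_comm]

lemma phi_one : phi (1 : Matrix (Fin m) (Fin m) k) = AlgHom.id k _ := by
  apply algHom_ext
  intro i
  rw [phi_X]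
  simp [Matrix.one_apply]

variable [Fact p.Prime] [CharP k p]

lemma phi_mem_J {M : Matrix (Fin m) (Fin m) k} {f : MvPolynomial (Fin m) k}
    (hf : f ∈ Jid p m k) : phi M f ∈ Jid p m k := by
  have hgen : ∀ i : Fin m, phi M ((X i : MvPolynomial (Fin m) k) ^ p) ∈ Jid p m k := by
    intro i
    rw [map_pow, phi_X, sum_pow_char]
    apply Ideal.sum_mem
    intro j _
    rw [smul_pow, smul_eq_C_mul]
    exact Ideal.mul_mem_left _ _ (Ideal.subset_span ⟨j, rfl⟩)
  have hmap : Ideal.map (phi M : MvPolynomial (Fin m) k →+* MvPolynomial (Fin m) k)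
      (Jid p m k) ≤ Jid p m k := by
    rw [Jid, Ideal.map_span, Ideal.span_le]
    rintro g ⟨g', ⟨i, rfl⟩, rfl⟩
    exact hgen i
  exact hmap (Ideal.mem_map_of_mem _ hf)

omit [Fact p.Prime] [CharP k p] in
lemma mu_eq_prod : mu p m k = ∏ i, (X i : MvPolynomial (Fin m) k) ^ (p - 1) := by
  rw [mu, monomial_eq, C_1, one_mul]
  rw [Finsupp.prod_fintype _ _ (fun i => pow_zero _)]
  rfl

omit [Fact p.Prime] [CharP k p] in
lemma add_pow_aux (x y : MvPolynomial (Fin m) k) (n : ℕ) :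
    ∃ r, (x + y) ^ n = y ^ n + x * r := by
  refine ⟨∑ t ∈ Finset.range n,
    x ^ t * y ^ (n - (t + 1)) * (n.choose (t + 1) : MvPolynomial (Fin m) k), ?_⟩
  rw [add_pow, Finset.sum_range_succ']
  simp only [pow_zero, one_mul, Nat.choose_zero_right, Nat.cast_one, mul_one, Nat.sub_zero]
  rw [add_comm, Finset.mul_sum]
  congr 1
  apply Finset.sum_congr rfl
  intro t _
  rw [pow_succ']
  ring

omit [CharP k p] in
lemma P_transvection (t : TransvectionStruct (Fin m) k) :
    phi t.toMatrix (mu p m k) - mu p m k ∈ Jid p m k := by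
  obtain ⟨i, j, hij, c⟩ := t
  rw [TransvectionStruct.toMatrix_mk]
  have hX : ∀ l, phi (Matrix.transvection i j c) (X l : MvPolynomial (Fin m) k)
      = X l + if l = j then c • X i else 0 := by
    intro l
    rw [phi_X]
    simp only [Matrix.transvection, Matrix.add_apply, Matrix.one_apply,
      Matrix.single, Matrix.of_apply, add_smul, Finset.sum_add_distrib,
      ite_smul, zero_smul]
    congr 1
    · simp [one_smul, Finset.sum_ite_eq']
    · by_cases hlj : l = j
      · subst hlj
        simp [Finset.sum_ite_eq]
      · simp [hlj, Ne.symm hlj]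
  obtain ⟨r, hr⟩ := add_pow_aux (c • X i) (X j : MvPolynomial (Fin m) k) (p - 1)
  set Q' : MvPolynomial (Fin m) k := ∏ l ∈ (Finset.univ.erase j).erase i, X l ^ (p - 1)
    with hQ'
  have hiej : i ∈ Finset.univ.erase j := Finset.mem_erase.mpr ⟨hij, Finset.mem_univ i⟩
  have hQ : (∏ l ∈ Finset.univ.erase j, (X l : MvPolynomial (Fin m) k) ^ (p - 1))
      = X i ^ (p - 1) * Q' := (Finset.mul_prod_erase _ _ hiej).symm
  have hmu2 : mu p m k = X j ^ (p - 1)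
      * ∏ l ∈ Finset.univ.erase j, (X l : MvPolynomial (Fin m) k) ^ (p - 1) := by
    rw [mu_eq_prod]
    exact (Finset.mul_prod_erase _ _ (Finset.mem_univ j)).symm
  have hphi : phi (Matrix.transvection i j c) (mu p m k)
      = (X j + c • X i) ^ (p - 1)
        * ∏ l ∈ Finset.univ.erase j, (X l : MvPolynomial (Fin m) k) ^ (p - 1) := by
    rw [mu_eq_prod, map_prod, ← Finset.mul_prod_erase Finset.univ _ (Finset.mem_univ j)]
    congr 1
    · rw [map_pow, hX]
      simp
    · apply Finset.prod_congr rfl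
      intro l hl
      rw [map_pow, hX, if_neg (Finset.mem_erase.mp hl).1, add_zero]
  have hXp : (X i : MvPolynomial (Fin m) k) ^ p = X i * X i ^ (p - 1) := by
    conv_lhs => rw [show p = (p - 1) + 1 from by have := (Fact.out : p.Prime).pos; omega]
    rw [pow_succ']
  have key : phi (Matrix.transvection i j c) (mu p m k) - mu p m k
      = C c * (r * Q' * X i ^ p) := by
    rw [hphi, hmu2, add_comm (X j) (c • X i), hr, hQ, smul_eq_C_mul, hXp]
    ring
  rw [key]
  exact Ideal.mul_mem_left _ _ (Ideal.mul_mem_left _ _ (Ideal.subset_span ⟨i, rfl⟩))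

omit [Fact p.Prime] [CharP k p] in
lemma P_diag {D : Fin m → k} (hD : ∏ i, D i = 1) :
    phi (Matrix.diagonal D) (mu p m k) - mu p m k ∈ Jid p m k := by
  have hX : ∀ l, phi (Matrix.diagonal D) (X l : MvPolynomial (Fin m) k) = D l • X l := by
    intro l
    rw [phi_X]
    simp [Matrix.diagonal_apply, ite_smul, Finset.sum_ite_eq]
  have hphi : phi (Matrix.diagonal D) (mu p m k) = mu p m k := by
    rw [mu_eq_prod, map_prod]
    simp_rw [map_pow, hX, smul_pow, smul_eq_C_mul]
    rw [Finset.prod_mul_distrib,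
      ← map_prod (C : k →+* MvPolynomial (Fin m) k) (fun x => D x ^ (p - 1)) Finset.univ,
      Finset.prod_pow, hD, one_pow, C_1, one_mul]
  rw [hphi, sub_self]
  exact zero_mem _

lemma P_mul {M N : Matrix (Fin m) (Fin m) k}
    (hM : phi M (mu p m k) - mu p m k ∈ Jid p m k)
    (hN : phi N (mu p m k) - mu p m k ∈ Jid p m k) :
    phi (M * N) (mu p m k) - mu p m k ∈ Jid p m k := by
  rw [phi_mul, AlgHom.comp_apply]
  have key : phi M (phi N (mu p m k)) - mu p m k
      = phi M (phi N (mu p m k) - mu p m k) + (phi M (mu p m k) - mu p m k) := by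
    rw [map_sub]
    ring
  rw [key]
  exact add_mem (phi_mem_J hN) hM

lemma P_list (L : List (TransvectionStruct (Fin m) k)) :
    phi (L.map TransvectionStruct.toMatrix).prod (mu p m k) - mu p m k ∈ Jid p m k := by
  induction L with
  | nil =>
      simp only [List.map_nil, List.prod_nil, phi_one, AlgHom.id_apply, sub_self]
      exact zero_mem _
  | cons t L ih =>
      rw [List.map_cons, List.prod_cons]
      exact P_mul (P_transvection t) ih

lemma P_unimodular {M : Matrix (Fin m) (Fin m) k} (hdet : M.det = 1) :
    phi M (mu p m k) - mu p m k ∈ Jid p m k := by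
  obtain ⟨L, L', D, hM⟩ := Matrix.Pivot.exists_list_transvec_mul_diagonal_mul_list_transvec M
  have hD : ∏ i, D i = 1 := by
    have h := hdet
    rw [hM] at h
    simpa [Matrix.det_mul, Matrix.det_diagonal] using h
  rw [hM]
  exact P_mul (P_mul (P_list L) (P_diag hD)) (P_list L')

end Statement17Aux

end

open Statement17Aux

noncomputable section


theorem statement17 (p : ℕ) [Fact p.Prime] (k : Type) [Field k] [IsAlgClosed k] [CharP k p]
    -- `m = dim 𝔤 > 0`:
    (m : ℕ) (hm : 0 < m)
    -- the group `G` acting on `S𝔤* = k[x₁, …, x_m]` by algebra automorphisms: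
    (G : Type) [Group G]
    (ρ : G →* (MvPolynomial (Fin m) k ≃ₐ[k] MvPolynomial (Fin m) k))
    -- the action preserves the grading of `S𝔤*`:
    (hgraded : ∀ (γ : G) (n : ℕ), ∀ f ∈ homogeneousSubmodule (Fin m) k n,
      ρ γ f ∈ homogeneousSubmodule (Fin m) k n)
    -- the action on `𝔤* = S¹𝔤*` is unimodular (it is the coadjoint action of a simple,
    -- simply-connected group):
    (hdet : ∀ γ : G,
      LinearMap.det ((ρ γ).toLinearMap.restrict
        (fun f hf => hgraded γ 1 f hf)) = 1) :
    -- with `d = (p-1)·m` and `I = ({v^p : v ∈ 𝔤*})`: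
    ∀ (d : ℕ), d = (p - 1) * m →
    ∀ (I : Ideal (MvPolynomial (Fin m) k)),
      I = Ideal.span {f | ∃ v ∈ homogeneousSubmodule (Fin m) k 1, f = v ^ p} →
    -- the quotient `S^d 𝔤*/(S^d 𝔤* ∩ I)` is one-dimensional …
    (Module.finrank k
        (↥(homogeneousSubmodule (Fin m) k d) ⧸
          ((I.restrictScalars k ⊓ homogeneousSubmodule (Fin m) k d).comap
            (homogeneousSubmodule (Fin m) k d).subtype)) = 1) ∧
    -- … and `G` acts trivially on it:
    (∀ (γ : G), ∀ x ∈ homogeneousSubmodule (Fin m) k d, ρ γ x - x ∈ I) := by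
  intro d hd I hI
  subst hd
  -- Step 1: `I` is the ideal generated by the `p`-th powers of the variables.
  have hIJ : I = Jid p m k := by
    rw [hI]
    apply le_antisymm
    · rw [Ideal.span_le]
      rintro f ⟨v, hv, rfl⟩
      have hrep := rep_deg_one hv
      rw [hrep, sum_pow_char]
      apply Ideal.sum_mem
      intro j _
      rw [smul_pow, smul_eq_C_mul]
      exact Ideal.mul_mem_left _ _ (Ideal.subset_span ⟨j, rfl⟩)
    · rw [Jid, Ideal.span_le]
      rintro g ⟨i, rfl⟩
      exact Ideal.subset_span ⟨X i,
        (mem_homogeneousSubmodule _ _).mpr (isHomogeneous_X _ _), rfl⟩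
  -- basic membership facts
  have hXmem : ∀ i : Fin m, (X i : MvPolynomial (Fin m) k)
      ∈ homogeneousSubmodule (Fin m) k 1 :=
    fun i => (mem_homogeneousSubmodule _ _).mpr (isHomogeneous_X _ _)
  constructor
  · -- dimension one
    have hmu_mem : mu p m k ∈ homogeneousSubmodule (Fin m) k ((p - 1) * m) :=
      mu_mem_homogeneous
    haveI : NoZeroSMulDivisors k
        (↥(homogeneousSubmodule (Fin m) k ((p - 1) * m)) ⧸
          ((I.restrictScalars k ⊓ homogeneousSubmodule (Fin m) k ((p - 1) * m)).comap
            (homogeneousSubmodule (Fin m) k ((p - 1) * m)).subtype)) :=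
      GroupWithZero.toNoZeroSMulDivisors
    apply finrank_eq_one
      (Submodule.Quotient.mk (⟨mu p m k, hmu_mem⟩ :
        homogeneousSubmodule (Fin m) k ((p - 1) * m)))
    · rw [Ne, Submodule.Quotient.mk_eq_zero]
      intro hmem
      rw [Submodule.mem_comap] at hmem
      exact mu_not_mem_J (hIJ ▸ hmem.1)
    · intro w
      obtain ⟨⟨f, hf⟩, rfl⟩ := Submodule.Quotient.mk_surjective _ w
      refine ⟨coeff (nu p m) f, ?_⟩
      rw [← Submodule.Quotient.mk_smul, Submodule.Quotient.eq, Submodule.mem_comap]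
      refine Submodule.mem_inf.mpr ⟨?_, ?_⟩
      · show (coeff (nu p m) f • mu p m k - f : MvPolynomial (Fin m) k) ∈ I
        rw [hIJ]
        have := neg_mem (sub_mem_J hf)
        simpa using this
      · exact Submodule.sub_mem _ (Submodule.smul_mem _ _ hmu_mem) hf
  · -- the action is trivial modulo `I`
    intro γ x hx
    -- the matrix of `ρ γ` in degree 1
    set Mγ : Matrix (Fin m) (Fin m) k :=
      Matrix.of fun j i => coeff (Finsupp.single j 1) (ρ γ (X i)) with hMγ
    have hrep : ∀ i, ρ γ (X i) = ∑ j, Mγ j i • X j := by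
      intro i
      exact rep_deg_one (hgraded γ 1 _ (hXmem i))
    have hphiM : ∀ f, phi Mγ f = ρ γ f := by
      have h : phi Mγ = (ρ γ : MvPolynomial (Fin m) k ≃ₐ[k] _).toAlgHom := by
        apply algHom_ext
        intro i
        rw [phi_X]
        exact (hrep i).symm
      intro f
      rw [h]
      rfl
    -- determinant of `Mγ` is 1
    have hli : LinearIndependent k fun i : Fin m =>
        (⟨X i, hXmem i⟩ : homogeneousSubmodule (Fin m) k 1) := by
      apply LinearIndependent.of_comp (homogeneousSubmodule (Fin m) k 1).subtype
      have h2 := (basisMonomials (Fin m) k).linearIndependent.comp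
        (fun i : Fin m => Finsupp.single i (1 : ℕ))
        (Finsupp.single_left_injective one_ne_zero)
      convert h2 using 1
      ext1 i
      simp [MvPolynomial.coe_basisMonomials, X]
    have hsp : ⊤ ≤ Submodule.span k (Set.range fun i : Fin m =>
        (⟨X i, hXmem i⟩ : homogeneousSubmodule (Fin m) k 1)) := by
      rintro ⟨f, hf⟩ -
      have hfrep := rep_deg_one hf
      have heq : (⟨f, hf⟩ : homogeneousSubmodule (Fin m) k 1)
          = ∑ j, coeff (Finsupp.single j 1) f • (⟨X j, hXmem j⟩ :
            homogeneousSubmodule (Fin m) k 1) := by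
        apply Subtype.ext
        simp only [AddSubmonoidClass.coe_finset_sum, SetLike.val_smul]
        exact hfrep
      rw [heq]
      exact Submodule.sum_mem _ fun j _ =>
        Submodule.smul_mem _ _ (Submodule.subset_span ⟨j, rfl⟩)
    set b : Module.Basis (Fin m) k (homogeneousSubmodule (Fin m) k 1) := Module.Basis.mk hli hsp with hb
    have hres : (ρ γ).toLinearMap.restrict (fun f hf => hgraded γ 1 f hf)
        = Matrix.toLin b b Mγ := by
      apply b.ext
      intro i
      rw [Matrix.toLin_self, hb, Module.Basis.mk_apply]
      apply Subtype.ext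
      show (ρ γ) (X i) = _
      rw [hrep i]
      simp [Module.Basis.mk_apply]
    have hdet1 : Mγ.det = 1 := by
      have h := hdet γ
      rw [hres, LinearMap.det_toLin] at h
      exact h
    -- conclude
    have hxd : x - coeff (nu p m) x • mu p m k ∈ Jid p m k := sub_mem_J hx
    have h0 : ρ γ x - x = phi Mγ x - x := by rw [hphiM x]
    have hkey : phi Mγ x - x
        = coeff (nu p m) x • (phi Mγ (mu p m k) - mu p m k)
          + (phi Mγ (x - coeff (nu p m) x • mu p m k)
              - (x - coeff (nu p m) x • mu p m k)) := by
      simp only [map_sub, _root_.map_smul, smul_sub]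
      abel
    rw [hIJ, h0, hkey]
    apply add_mem
    · rw [smul_eq_C_mul]
      exact Ideal.mul_mem_left _ _ (P_unimodular hdet1)
    · exact sub_mem (phi_mem_J hxd) hxd

end
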